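/- For every permutation π of {1,…,n}, the strip swap distance satisfies SSD(π) ≥ ⌈rev(π)/2⌉. -/

import Mathlib

/-- A run: each element is the successor of the previous one. -/
def IsRun (l : List ℕ) : Prop := l.Chain' (fun a b => b = a + 1)

/-- `noLink x y`: the optional value `y` does not continue the optional value `x` by +1. -/
def noLink (x y : Option ℕ) : Prop := ∀ a ∈ x, ∀ b ∈ y, b ≠ a + 1

/-- Number of "breaks" between consecutive entries (places where the successor chain stops). -/
def breaks (l : List ℕ) : ℕ := (l.zip l.tail).countP (fun p => decide (p.2 ≠ p.1 + 1))

/-- Number of strips (maximal runs of consecutive increasing values). -/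
def numStrips (l : List ℕ) : ℕ := if l = [] then 0 else 1 + breaks l

/-- Number of reversals (descents): adjacent pairs with the left entry larger. -/
def revCount (l : List ℕ) : ℕ := (l.zip l.tail).countP (fun p => decide (p.2 < p.1))

/-- `π'` is obtained from `π` by swapping two (disjoint) strips of `π`. -/
def StripSwap (π π' : List ℕ) : Prop :=
  ∃ A X B Y C : List ℕ,
    π = A ++ X ++ B ++ Y ++ C ∧
    π' = A ++ Y ++ B ++ X ++ C ∧
    X ≠ [] ∧ Y ≠ [] ∧ IsRun X ∧ IsRun Y ∧
    noLink A.getLast? X.head? ∧ noLink X.getLast? (B ++ Y ++ C).head? ∧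
    noLink (A ++ X ++ B).getLast? Y.head? ∧ noLink Y.getLast? C.head?

/-- `π'` is obtained from `π` by removing one strip and reinserting it at another position. -/
def BlockMove (π π' : List ℕ) : Prop :=
  ∃ A X B A' B' : List ℕ,
    π = A ++ X ++ B ∧
    X ≠ [] ∧ IsRun X ∧
    noLink A.getLast? X.head? ∧ noLink X.getLast? B.head? ∧
    A' ++ B' = A ++ B ∧ A' ≠ A ∧
    π' = A' ++ X ++ B'

/-- `StepsTo R k a b`: `b` is reachable from `a` in exactly `k` steps of the relation `R`. -/
def StepsTo (R : List ℕ → List ℕ → Prop) : ℕ → List ℕ → List ℕ → Prop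
  | 0 => fun a b => a = b
  | k + 1 => fun a b => ∃ c, R a c ∧ StepsTo R k c b

/-- The identity permutation of `{1,…,n}` in one-line notation. -/
def idPerm (n : ℕ) : List ℕ := List.range' 1 n

/-- Strip swap distance to the identity permutation of `{1,…,n}`. -/
noncomputable def SSD (n : ℕ) (π : List ℕ) : ℕ :=
  sInf {m | StepsTo StripSwap m π (idPerm n)}

/-- Block sorting distance to the identity permutation of `{1,…,n}`. -/
noncomputable def BS (n : ℕ) (π : List ℕ) : ℕ :=
  sInf {m | StepsTo BlockMove m π (idPerm n)}


-- Auxiliary development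

def dj : Option ℕ → Option ℕ → ℕ
  | some a, some b => if b < a then 1 else 0
  | _, _ => 0

lemma revCount_nil : revCount [] = 0 := rfl
lemma revCount_singleton (a : ℕ) : revCount [a] = 0 := rfl
lemma revCount_cons_cons (a b : ℕ) (t : List ℕ) :
    revCount (a :: b :: t) = (if b < a then 1 else 0) + revCount (b :: t) := by
  simp [revCount, List.countP_cons]
  split <;> omega

lemma revCount_append (u v : List ℕ) :
    revCount (u ++ v) = revCount u + revCount v + dj u.getLast? v.head? := by
  induction u with
  | nil => simp [revCount_nil, dj]
  | cons a t ih =>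
    cases t with
    | nil =>
      cases v with
      | nil => simp [revCount_singleton, revCount_nil, dj]
      | cons b s => simp [revCount_cons_cons, revCount_singleton, dj]; omega
    | cons b t' =>
      rw [show (a :: b :: t') ++ v = a :: b :: (t' ++ v) from rfl,
        revCount_cons_cons a b (t' ++ v),
        show b :: (t' ++ v) = (b :: t') ++ v from rfl, ih,
        revCount_cons_cons a b t', List.getLast?_cons_cons]
      omega

lemma dj_exchange (p q x y : Option ℕ) : dj p x + dj q y ≤ 1 + dj p y + dj q x := by
  rcases p with _|p <;> rcases q with _|q <;> rcases x with _|x <;> rcases y with _|y <;>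
    simp [dj] <;> split_ifs <;> omega

lemma dj_key2 (a c : Option ℕ) (x x' y y' : ℕ) (hx : x ≤ x') (hy : y ≤ y') :
    dj a (some x) + dj (some x') (some y) + dj (some y') c
      ≤ 2 + (dj a (some y) + dj (some y') (some x) + dj (some x') c) := by
  rcases a with _|a <;> rcases c with _|c <;> simp [dj] <;> split_ifs <;> omega

lemma isRun_eq_range' : ∀ (a : ℕ) (t : List ℕ), IsRun (a :: t) → a :: t = List.range' a (t.length + 1)
  | a, [], _ => rfl
  | a, b :: t, h => by
    obtain ⟨hb, ht⟩ := List.isChain_cons_cons.mp h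
    subst hb
    rw [isRun_eq_range' _ t ht]
    simp [List.range'_succ]

lemma run_head_le_last (a : ℕ) (t : List ℕ) (h : IsRun (a :: t)) :
    ∀ b ∈ (a :: t).getLast?, a ≤ b := by
  intro b hb
  rw [isRun_eq_range' a t h] at hb
  rw [List.getLast?_eq_getLast_of_ne_nil (by simp)] at hb
  simp at hb
  subst hb
  have := List.getLast_mem (l := List.range' a (t.length + 1)) (by simp)
  rw [List.mem_range'] at this
  omega


lemma dj_none_left (y : Option ℕ) : dj none y = 0 := by cases y <;> rfl
lemma dj_none_right (x : Option ℕ) : dj x none = 0 := by cases x <;> rfl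

lemma revCount_five (A X B Y C : List ℕ) (hX : X ≠ []) (hY : Y ≠ []) :
    revCount (A ++ X ++ B ++ Y ++ C) =
    revCount A + revCount X + revCount B + revCount Y + revCount C
    + dj A.getLast? X.head? + dj X.getLast? B.head?
    + dj (A ++ X ++ B).getLast? Y.head? + dj Y.getLast? C.head? := by
  rw [revCount_append (A ++ X ++ B ++ Y) C, revCount_append (A ++ X ++ B) Y,
      revCount_append (A ++ X) B, revCount_append A X,
      List.getLast?_append_of_ne_nil (A ++ X ++ B) hY,
      List.getLast?_append_of_ne_nil A hX]
  omega

/-- key: a strip swap removes at most 2 descents. -/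
lemma stripSwap_revCount (π π' : List ℕ) (h : StripSwap π π') :
    revCount π ≤ revCount π' + 2 := by
  obtain ⟨A, X, B, Y, C, hπ, hπ', hX, hY, hrX, hrY, -, -, -, -⟩ := h
  obtain ⟨x, Xt, rfl⟩ : ∃ x t, X = x :: t := by cases X with
    | nil => exact absurd rfl hX | cons x t => exact ⟨x, t, rfl⟩
  obtain ⟨y, Yt, rfl⟩ : ∃ y t, Y = y :: t := by cases Y with
    | nil => exact absurd rfl hY | cons y t => exact ⟨y, t, rfl⟩
  obtain ⟨x', hx'⟩ : ∃ x', (x :: Xt).getLast? = some x' :=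
    ⟨_, List.getLast?_eq_getLast_of_ne_nil (by simp)⟩
  obtain ⟨y', hy'⟩ : ∃ y', (y :: Yt).getLast? = some y' :=
    ⟨_, List.getLast?_eq_getLast_of_ne_nil (by simp)⟩
  have hxx' : x ≤ x' := run_head_le_last x Xt hrX x' hx'
  have hyy' : y ≤ y' := run_head_le_last y Yt hrY y' hy'
  subst hπ hπ'
  rw [revCount_five A (x :: Xt) B (y :: Yt) C (by simp) (by simp),
      revCount_five A (y :: Yt) B (x :: Xt) C (by simp) (by simp)]
  rcases B with _ | ⟨b, Bt⟩
  · rw [List.append_nil, List.append_nil,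
        List.getLast?_append_of_ne_nil A (l₂ := x :: Xt) (by simp),
        List.getLast?_append_of_ne_nil A (l₂ := y :: Yt) (by simp)]
    simp only [List.head?_cons, List.head?_nil, dj_none_right, hx', hy']
    have := dj_key2 A.getLast? C.head? x x' y y' hxx' hyy'
    omega
  · rw [List.getLast?_append_of_ne_nil (A ++ (x :: Xt)) (l₂ := b :: Bt) (by simp),
        List.getLast?_append_of_ne_nil (A ++ (y :: Yt)) (l₂ := b :: Bt) (by simp)]
    simp only [List.head?_cons, hx', hy']
    have h1 := dj_exchange A.getLast? (b :: Bt).getLast? (some x) (some y)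
    have h2 := dj_exchange (some x') (some y') (some b) C.head?
    omega

def runFrom (a : ℕ) : List ℕ → List ℕ × List ℕ
  | [] => ([], [])
  | b :: t => if b = a + 1 then ((b :: (runFrom b t).1), (runFrom b t).2) else ([], b :: t)

lemma runFrom_append (a : ℕ) (l : List ℕ) : (runFrom a l).1 ++ (runFrom a l).2 = l := by
  induction l generalizing a with
  | nil => rfl
  | cons b t ih =>
    simp only [runFrom]
    split
    · simpa using ih b
    · rfl

lemma runFrom_isRun (a : ℕ) (l : List ℕ) : IsRun (a :: (runFrom a l).1) := by
  induction l generalizing a with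
  | nil => simp [runFrom, IsRun]; exact List.isChain_singleton _
  | cons b t ih =>
    simp only [runFrom]
    split
    · rename_i hb
      exact List.isChain_cons_cons.mpr ⟨hb, ih b⟩
    · simp [IsRun]; exact List.isChain_singleton _

lemma runFrom_noLink (a : ℕ) (l : List ℕ) :
    noLink (a :: (runFrom a l).1).getLast? (runFrom a l).2.head? := by
  induction l generalizing a with
  | nil => intro p hp c hc; simp [runFrom] at hc
  | cons b t ih =>
    simp only [runFrom]
    split
    · rename_i hb
      rw [List.getLast?_cons_cons]
      exact ih b
    · rename_i hb
      intro p hp c hc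
      simp at hp hc
      omega

lemma range'_getLast? (j : ℕ) (hj : j ≠ 0) : (List.range' 1 j).getLast? = some j := by
  obtain ⟨j', rfl⟩ : ∃ j', j = j' + 1 := ⟨j - 1, by omega⟩
  rw [List.range'_1_concat, List.getLast?_append_of_ne_nil _ (by simp)]
  simp [Nat.add_comm]

lemma swap_perm (u v w x y : List ℕ) : (u ++ v ++ w ++ x ++ y).Perm (u ++ x ++ w ++ v ++ y) := by
  rw [← Multiset.coe_eq_coe]
  simp only [← Multiset.coe_add]
  abel



lemma isRun'_eq_range' : ∀ (a : ℕ) (t : List ℕ), IsRun (a :: t) → a :: t = List.range' a (t.length + 1)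
  | a, [], _ => rfl
  | a, b :: t, h => by
    obtain ⟨hb, ht⟩ := List.isChain_cons_cons.mp h
    subst hb
    rw [isRun'_eq_range' _ t ht]
    simp [List.range'_succ]

lemma sortable_aux (n : ℕ) : ∀ (k j : ℕ) (R : List ℕ),
    n - j ≤ k → (List.range' 1 j ++ R).Perm (List.range' 1 n) →
    ∃ m, StepsTo StripSwap m (List.range' 1 j ++ R) (List.range' 1 n) := by
  intro k
  induction k with
  | zero =>
    intro j R hk hp
    have hlen := hp.length_eq
    simp at hlen
    have hR : R = [] := List.length_eq_zero_iff.mp (by omega)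
    subst hR
    have hj : j = n := by omega
    subst hj
    exact ⟨0, by simp [StepsTo]⟩
  | succ k ih =>
    intro j R hk hp
    have hlen := hp.length_eq
    simp at hlen
    rcases R with _ | ⟨h, R'⟩
    · have hj : j = n := by simpa using hlen
      subst hj
      exact ⟨0, by simp [StepsTo]⟩
    · have hjlt : j < n := by simp at hlen; omega
      have hRperm : (h :: R').Perm (List.range' (1 + j) (n - j)) := by
        have hid : List.range' 1 n = List.range' 1 j ++ List.range' (1 + j) (n - j) := by
          rw [List.range'_append_1]; congr 1; omega
        rw [hid] at hp
        exact (List.perm_append_left_iff _).1 hp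
      have hge : ∀ e ∈ h :: R', j + 1 ≤ e := by
        intro e he
        have := hRperm.subset he
        rw [List.mem_range'] at this
        omega
      by_cases hh : h = j + 1
      · subst hh
        have heq : List.range' 1 j ++ (j + 1) :: R' = List.range' 1 (j + 1) ++ R' := by
          rw [List.range'_1_concat]
          simp [Nat.add_comm]
        rw [heq] at hp ⊢
        exact ih (j + 1) R' (by omega) hp
      · -- swap case
        have hmem : (j + 1) ∈ h :: R' := by
          refine hRperm.mem_iff.mpr ?_
          rw [List.mem_range']
          exact ⟨0, by omega, by omega⟩
        obtain ⟨B, T, hBT⟩ := List.append_of_mem hmem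
        rcases B with _ | ⟨b, Bt⟩
        · simp at hBT; exact absurd hBT.1 hh
        · obtain ⟨hbh, hR'⟩ : h = b ∧ R' = Bt ++ (j + 1) :: T :=
            List.cons_eq_cons.mp (by simpa using hBT)
          subst hbh
          subst hR'
          obtain ⟨U, C, hUC⟩ : ∃ U C, (U, C) = runFrom (j + 1) T := ⟨_, _, rfl⟩
          obtain ⟨V, B₁, hVB⟩ : ∃ V B₁, (V, B₁) = runFrom h Bt := ⟨_, _, rfl⟩
          have hT : U ++ C = T := by rw [show U = (runFrom (j+1) T).1 from congrArg Prod.fst hUC,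
            show C = (runFrom (j+1) T).2 from congrArg Prod.snd hUC]; exact runFrom_append _ _
          have hBt : V ++ B₁ = Bt := by rw [show V = (runFrom h Bt).1 from congrArg Prod.fst hVB,
            show B₁ = (runFrom h Bt).2 from congrArg Prod.snd hVB]; exact runFrom_append _ _
          have hrunX : IsRun ((j + 1) :: U) := by
            rw [show U = (runFrom (j+1) T).1 from congrArg Prod.fst hUC]; exact runFrom_isRun _ _
          have hrunS : IsRun (h :: V) := by
            rw [show V = (runFrom h Bt).1 from congrArg Prod.fst hVB]; exact runFrom_isRun _ _
          have hnlX : noLink ((j + 1) :: U).getLast? C.head? := by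
            rw [show U = (runFrom (j+1) T).1 from congrArg Prod.fst hUC,
              show C = (runFrom (j+1) T).2 from congrArg Prod.snd hUC]
            exact runFrom_noLink _ _
          have hnlS : noLink (h :: V).getLast? B₁.head? := by
            rw [show V = (runFrom h Bt).1 from congrArg Prod.fst hVB,
              show B₁ = (runFrom h Bt).2 from congrArg Prod.snd hVB]
            exact runFrom_noLink _ _
          have hR'eq : h :: (Bt ++ (j + 1) :: T) =
              (h :: V) ++ (B₁ ++ ((j + 1) :: U) ++ C) := by
            rw [← hT, ← hBt]; simp
          have hmemS : ∀ p ∈ (h :: V).getLast?, j + 1 ≤ p := by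
            intro p hp
            apply hge
            rw [hR'eq]
            exact List.mem_append_left _ (List.mem_of_getLast? hp)
          have hmemB₁ : ∀ p ∈ B₁.getLast?, j + 1 ≤ p := by
            intro p hp
            apply hge
            rw [hR'eq]
            refine List.mem_append_right _ (List.mem_append_left _ (List.mem_append_left _ ?_))
            exact List.mem_of_getLast? hp
          have cond1 : noLink (List.range' 1 j).getLast? (h :: V).head? := by
            intro p hp q hq
            simp at hq
            subst hq
            rcases Nat.eq_zero_or_pos j with hj0 | hj0
            · subst hj0; simp at hp
            · rw [range'_getLast? j (by omega)] at hp
              simp at hp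
              omega
          have cond2 : noLink (h :: V).getLast? (B₁ ++ ((j + 1) :: U) ++ C).head? := by
            rcases B₁ with _ | ⟨c, t⟩
            · intro p hp q hq
              simp at hq
              have := hmemS p hp
              omega
            · intro p hp q hq
              simp at hq
              subst hq
              exact hnlS p hp c (by simp)
          have cond3 : noLink (List.range' 1 j ++ (h :: V) ++ B₁).getLast? ((j + 1) :: U).head? := by
            intro p hp q hq
            simp at hq
            subst hq
            rcases B₁ with _ | ⟨c, t⟩
            · rw [List.append_nil, List.getLast?_append_of_ne_nil _ (l₂ := h :: V) (by simp)] at hp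
              have := hmemS p hp
              omega
            · rw [List.getLast?_append_of_ne_nil _ (l₂ := c :: t) (by simp)] at hp
              have := hmemB₁ p hp
              omega
          have hπeq : List.range' 1 j ++ h :: (Bt ++ (j + 1) :: T) =
              List.range' 1 j ++ (h :: V) ++ B₁ ++ ((j + 1) :: U) ++ C := by
            rw [hR'eq]; simp [List.append_assoc]
          have hswap : StripSwap (List.range' 1 j ++ h :: (Bt ++ (j + 1) :: T))
              (List.range' 1 j ++ ((j + 1) :: U) ++ B₁ ++ (h :: V) ++ C) :=
            ⟨List.range' 1 j, h :: V, B₁, (j + 1) :: U, C, hπeq, rfl,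
             by simp, by simp, hrunS, hrunX, cond1, cond2, cond3, hnlX⟩
          have hXrange : (j + 1) :: U = List.range' (j + 1) (U.length + 1) :=
            isRun'_eq_range' _ _ hrunX
          have hπ' : List.range' 1 j ++ ((j + 1) :: U) ++ B₁ ++ (h :: V) ++ C =
              List.range' 1 (j + (U.length + 1)) ++ (B₁ ++ ((h :: V) ++ C)) := by
            rw [hXrange,
              ← List.range'_append_1 (s := 1) (m := j) (n := U.length + 1),
              show 1 + j = j + 1 from Nat.add_comm 1 j]
            simp [List.append_assoc]
          have hperm' : (List.range' 1 (j + (U.length + 1)) ++ (B₁ ++ ((h :: V) ++ C))).Perm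
              (List.range' 1 n) := by
            rw [← hπ']
            exact (swap_perm (List.range' 1 j) ((j + 1) :: U) B₁ (h :: V) C).trans (hπeq ▸ hp)
          obtain ⟨m, hm⟩ := ih (j + (U.length + 1)) (B₁ ++ ((h :: V) ++ C)) (by omega) hperm'
          exact ⟨m + 1, _, hswap, by rw [hπ']; exact hm⟩

lemma isRun_range'' : ∀ (n s : ℕ), IsRun (List.range' s n)
  | 0, s => List.isChain_nil
  | 1, s => by simp [IsRun]; exact List.isChain_singleton _
  | (n+2), s => by
    rw [List.range'_succ, List.range'_succ]
    exact List.isChain_cons_cons.mpr ⟨rfl, by rw [← List.range'_succ]; exact isRun_range'' (n+1) (s+1)⟩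

lemma revCount_of_isRun : ∀ (l : List ℕ), IsRun l → revCount l = 0
  | [], _ => rfl
  | [a], _ => rfl
  | (a :: b :: t), h => by
    obtain ⟨hb, ht⟩ := List.isChain_cons_cons.mp h
    rw [revCount_cons_cons, revCount_of_isRun _ ht]
    simp
    omega

lemma steps_rev (n : ℕ) : ∀ (k : ℕ) (a : List ℕ),
    StepsTo StripSwap k a (idPerm n) → revCount a ≤ 2 * k
  | 0, a, h => by
    rw [show a = idPerm n from h]
    rw [show idPerm n = List.range' 1 n from rfl, revCount_of_isRun _ (isRun_range'' n 1)]
  | k + 1, a, ⟨c, hac, hc⟩ => by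
    have h1 := stripSwap_revCount a c hac
    have h2 := steps_rev n k c hc
    omega

/-- `SSD(π) ≥ ⌈rev(π)/2⌉`. -/
theorem SSD_ge_rev_bound (n : ℕ) (π : List ℕ) (hperm : π.Perm (idPerm n)) :
    SSD n π ≥ (revCount π + 1) / 2 := by
  obtain ⟨m, hm⟩ := sortable_aux n n 0 π (by omega) (by simpa [idPerm] using hperm)
  have hm' : StepsTo StripSwap m π (idPerm n) := by simpa [idPerm] using hm
  have hne : {m | StepsTo StripSwap m π (idPerm n)}.Nonempty := ⟨m, hm'⟩
  have hmem : StepsTo StripSwap (SSD n π) π (idPerm n) := Nat.sInf_mem hne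
  have hb := steps_rev n (SSD n π) π hmem
  have : SSD n π ≥ (revCount π + 1) / 2 := by omega
  exact this
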